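/- arXiv:2110.01088 — 3 statements merged into one kernel-verified Lean document; each statement's English description precedes it below -/
import Mathlib

section
/- A holomorphic function f(z) = Σ aₙ zⁿ on the open unit disc belongs to A^∞(𝔻) (i.e., f and all its derivatives extend continuously to the closed disc) if and only if nᵏ aₙ → 0 as n → ∞ for every k ∈ ℕ. -/
open Filter Topology Metric
open scoped NNReal
noncomputable def Dop (c : ℕ → ℂ) : ℕ → ℂ := fun n => ((n : ℂ) + 1) * c (n + 1)

lemma coefBound {c : ℕ → ℂ} (hc : ∀ z : ℂ, ‖z‖ < 1 → Summable fun n => c n * z ^ n)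
    {ρ : ℝ} (h0 : 0 ≤ ρ) (h1 : ρ < 1) : ∃ C : ℝ, 0 ≤ C ∧ ∀ n, ‖c n‖ * ρ ^ n ≤ C := by
  have hs := hc (ρ : ℂ) (by simpa [abs_of_nonneg h0] using h1)
  have ht : Tendsto (fun n => ‖c n * (ρ : ℂ) ^ n‖) atTop (𝓝 0) := by
    simpa using hs.tendsto_atTop_zero.norm
  obtain ⟨C, hC⟩ := ht.bddAbove_range
  refine ⟨C, le_trans (norm_nonneg _) (hC ⟨0, rfl⟩), fun n => ?_⟩
  have := hC ⟨n, rfl⟩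
  simpa [norm_mul, norm_pow, Complex.norm_real, abs_of_nonneg h0] using this

lemma summableAux {c : ℕ → ℂ} (hc : ∀ z : ℂ, ‖z‖ < 1 → Summable fun n => c n * z ^ n)
    {r : ℝ} (h0 : 0 ≤ r) (h1 : r < 1) :
    Summable (fun n : ℕ => ((n : ℝ) + 1) * ‖c (n + 1)‖ * r ^ n) := by
  obtain ⟨ρ, hρ0, hρ1, hrρ⟩ : ∃ ρ : ℝ, 0 < ρ ∧ ρ < 1 ∧ r < ρ :=
    ⟨(r + 1) / 2, by positivity, by linarith, by linarith⟩
  obtain ⟨C, hC0, hC⟩ := coefBound hc hρ0.le hρ1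
  have hx : |r / ρ| < 1 := by
    rw [abs_of_nonneg (by positivity)]
    rw [div_lt_one hρ0]; exact hrρ
  have h1s : Summable (fun n : ℕ => (n : ℝ) * (r / ρ) ^ n) := by
    simpa using summable_pow_mul_geometric_of_norm_lt_one 1 (by rw [Real.norm_eq_abs]; exact hx)
  have h2s : Summable (fun n : ℕ => (r / ρ) ^ n) :=
    summable_geometric_of_lt_one (by positivity) (by rwa [abs_of_nonneg (by positivity)] at hx)
  have hsum : Summable (fun n : ℕ => (C / ρ) * (((n : ℝ) + 1) * (r / ρ) ^ n)) := by
    refine Summable.mul_left _ ?_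
    simpa [add_mul, one_mul] using h1s.add h2s
  refine Summable.of_nonneg_of_le (fun n => by positivity) (fun n => ?_) hsum
  have hcn : ‖c (n + 1)‖ ≤ C / ρ ^ (n + 1) := by
    rw [le_div_iff₀ (by positivity)]
    exact hC (n + 1)
  calc ((n : ℝ) + 1) * ‖c (n + 1)‖ * r ^ n
      ≤ ((n : ℝ) + 1) * (C / ρ ^ (n + 1)) * r ^ n := by
        have hn : (0:ℝ) ≤ (n : ℝ) + 1 := by positivity
        have hr : (0:ℝ) ≤ r ^ n := by positivity
        exact mul_le_mul_of_nonneg_right (mul_le_mul_of_nonneg_left hcn hn) hr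
    _ = (C / ρ) * (((n : ℝ) + 1) * (r / ρ) ^ n) := by
        have hρne : ρ ≠ 0 := ne_of_gt hρ0
        rw [div_pow]
        field_simp
        ring


lemma hcD {c : ℕ → ℂ} (hc : ∀ z : ℂ, ‖z‖ < 1 → Summable fun n => c n * z ^ n) :
    ∀ z : ℂ, ‖z‖ < 1 → Summable fun n => Dop c n * z ^ n := by
  intro z hz
  refine Summable.of_norm ?_
  refine (summableAux hc (norm_nonneg z) hz).congr fun n => ?_
  have hn : ‖((n : ℂ) + 1)‖ = (n : ℝ) + 1 := by
    rw [show ((n : ℂ) + 1) = ((n + 1 : ℕ) : ℂ) by push_cast; ring, Complex.norm_natCast]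
    push_cast; ring
  simp only [Dop, norm_mul, norm_pow, hn]

lemma stepDeriv {c : ℕ → ℂ} (hc : ∀ z : ℂ, ‖z‖ < 1 → Summable fun n => c n * z ^ n)
    {z : ℂ} (hz : ‖z‖ < 1) :
    HasDerivAt (fun w => ∑' n, c n * w ^ n) (∑' n, Dop c n * z ^ n) z := by
  obtain ⟨r, hzr, hr0, hr1⟩ : ∃ r : ℝ, ‖z‖ < r ∧ 0 < r ∧ r < 1 :=
    ⟨(‖z‖ + 1) / 2, by linarith, by positivity, by linarith⟩
  have hu : Summable (fun n : ℕ => (n : ℝ) * ‖c n‖ * r ^ (n - 1)) := by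
    rw [← summable_nat_add_iff 1]
    refine (summableAux hc hr0.le hr1).congr fun n => ?_
    push_cast
    simp
  have hbound : ∀ (n : ℕ) (y : ℂ), y ∈ ball (0 : ℂ) r →
      ‖c n * ((n : ℂ) * y ^ (n - 1))‖ ≤ (n : ℝ) * ‖c n‖ * r ^ (n - 1) := by
    intro n y hy
    rw [mem_ball_zero_iff] at hy
    have : ‖c n * ((n : ℂ) * y ^ (n - 1))‖ = (n : ℝ) * ‖c n‖ * ‖y‖ ^ (n - 1) := by
      simp [norm_mul, norm_pow]; ring
    rw [this]
    exact mul_le_mul_of_nonneg_left (pow_le_pow_left₀ (norm_nonneg y) hy.le _)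
      (by positivity)
  have key := hasDerivAt_tsum_of_isPreconnected hu isOpen_ball
      (convex_ball (0 : ℂ) r).isPreconnected
      (g := fun n w => c n * w ^ n) (g' := fun n w => c n * ((n : ℂ) * w ^ (n - 1)))
      (fun n y _ => (hasDerivAt_pow n y).const_mul (c n))
      hbound (mem_ball_self hr0) (by simpa using hc 0 (by simp))
      (mem_ball_zero_iff.mpr hzr)
  have heq : (∑' n, c n * ((n : ℂ) * z ^ (n - 1))) = ∑' n, Dop c n * z ^ n := by
    have hsum : Summable fun n => c n * ((n : ℂ) * z ^ (n - 1)) :=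
      Summable.of_norm_bounded hu (fun n => hbound n z (mem_ball_zero_iff.mpr hzr))
    rw [hsum.tsum_eq_zero_add]
    simp only [Nat.cast_zero, zero_mul, mul_zero, zero_add, Nat.add_sub_cancel]
    refine tsum_congr fun n => ?_
    simp only [Dop]
    push_cast
    ring
  rw [← heq]
  exact key


lemma hcIter {c : ℕ → ℂ} (hc : ∀ z : ℂ, ‖z‖ < 1 → Summable fun n => c n * z ^ n) (k : ℕ) :
    ∀ z : ℂ, ‖z‖ < 1 → Summable fun n => (Dop^[k] c) n * z ^ n := by
  induction k with
  | zero => exact hc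
  | succ k ih =>
    rw [Function.iterate_succ_apply']
    exact hcD ih

lemma iterDeriv {c : ℕ → ℂ} (hc : ∀ z : ℂ, ‖z‖ < 1 → Summable fun n => c n * z ^ n) (k : ℕ) :
    ∀ z : ℂ, ‖z‖ < 1 →
      iteratedDeriv k (fun w => ∑' n, c n * w ^ n) z = ∑' n, (Dop^[k] c) n * z ^ n := by
  induction k with
  | zero => intro z hz; simp
  | succ k ih =>
    intro z hz
    rw [iteratedDeriv_succ]
    have hev : iteratedDeriv k (fun w => ∑' n, c n * w ^ n)
        =ᶠ[𝓝 z] fun w => ∑' n, (Dop^[k] c) n * w ^ n := by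
      filter_upwards [isOpen_ball.mem_nhds (mem_ball_zero_iff.mpr hz)] with w hw
      exact ih w (mem_ball_zero_iff.mp hw)
    rw [hev.deriv_eq, (stepDeriv (hcIter hc k) hz).deriv, Function.iterate_succ_apply']

lemma iterCoeff (k : ℕ) : ∀ (c : ℕ → ℂ) (n : ℕ),
    (Dop^[k] c) n = ((n + k).descFactorial k : ℂ) * c (n + k) := by
  induction k with
  | zero => intro c n; simp
  | succ k ih =>
    intro c n
    rw [Function.iterate_succ_apply, ih (Dop c) n]
    simp only [Dop]
    rw [show n + (k + 1) = (n + k) + 1 by ring, Nat.succ_descFactorial_succ]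
    push_cast
    ring

lemma descFactLower (k : ℕ) : ∀ m : ℕ, (m + 1 - k) ^ k ≤ m.descFactorial k := by
  induction k with
  | zero => intro m; simp
  | succ k ih =>
    intro m
    rw [Nat.descFactorial_succ, Nat.succ_sub_succ]
    calc (m - k) ^ (k + 1) = (m - k) * (m - k) ^ k := by ring
      _ ≤ (m - k) * (m + 1 - k) ^ k :=
          Nat.mul_le_mul_left _ (Nat.pow_le_pow_left (by omega) k)
      _ ≤ (m - k) * m.descFactorial k := Nat.mul_le_mul_left _ (ih m)

lemma hasFPS {c : ℕ → ℂ} (hc : ∀ z : ℂ, ‖z‖ < 1 → Summable fun n => c n * z ^ n) :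
    HasFPowerSeriesOnBall (fun w => ∑' n, c n * w ^ n)
      (fun n => ContinuousMultilinearMap.mkPiRing ℂ (Fin n) (c n)) 0 1 := by
  constructor
  · refine ENNReal.le_of_forall_nnreal_lt fun r hr => ?_
    have hr1 : (r : ℝ) < 1 := by exact_mod_cast hr
    obtain ⟨C, hC0, hC⟩ := coefBound hc r.coe_nonneg hr1
    exact FormalMultilinearSeries.le_radius_of_bound _ C fun n => by
      simpa [ContinuousMultilinearMap.norm_mkPiRing] using hC n
  · exact one_pos
  · intro y hy
    have hy' : ‖y‖ < 1 := by
      simp at hy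
      rw [← ofReal_norm_eq_enorm, ENNReal.ofReal_lt_one] at hy
      exact hy
    have := (hc y hy').hasSum
    simp only [zero_add, ContinuousMultilinearMap.mkPiRing_apply, Finset.prod_const,
      Finset.card_fin, smul_eq_mul]
    rw [show (fun n => y ^ n * c n) = fun n => c n * y ^ n from funext fun n => mul_comm _ _]
    exact this

lemma cauchyEst {c : ℕ → ℂ} (hc : ∀ z : ℂ, ‖z‖ < 1 → Summable fun n => c n * z ^ n)
    {M : ℝ} (hM : ∀ z : ℂ, ‖z‖ < 1 → ‖∑' n, c n * z ^ n‖ ≤ M) (n : ℕ) :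
    ‖c n‖ ≤ M := by
  set F : ℂ → ℂ := fun w => ∑' n, c n * w ^ n with hF
  have hdiff : ∀ z : ℂ, ‖z‖ < 1 → DifferentiableAt ℂ F z :=
    fun z hz => (stepDeriv hc hz).differentiableAt
  have key : ∀ r : ℝ≥0, 0 < r → (r : ℝ) < 1 → ‖c n‖ ≤ M * ((r : ℝ)⁻¹) ^ n := by
    intro r hr0 hr1
    have hsub : closedBall (0 : ℂ) r ⊆ {z : ℂ | ‖z‖ < 1} := by
      intro z hz
      rw [mem_closedBall_zero_iff] at hz
      exact lt_of_le_of_lt hz hr1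
    have hd : DifferentiableOn ℂ F (closedBall (0 : ℂ) r) :=
      fun z hz => (hdiff z (hsub hz)).differentiableWithinAt
    have hq := hd.hasFPowerSeriesOnBall hr0
    have hpq : (fun n => ContinuousMultilinearMap.mkPiRing ℂ (Fin n) (c n))
        = cauchyPowerSeries F 0 r :=
      (hasFPS hc).hasFPowerSeriesAt.eq_formalMultilinearSeries hq.hasFPowerSeriesAt
    have h1 : ‖c n‖ = ‖cauchyPowerSeries F 0 r n‖ := by
      rw [← hpq]
      exact (ContinuousMultilinearMap.norm_mkPiRing (𝕜 := ℂ) (ι := Fin n) (c n)).symm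
    have h2 := norm_cauchyPowerSeries_le F 0 r n
    -- bound the integral by 2π M
    have hcont : Continuous fun θ : ℝ => ‖F (circleMap 0 r θ)‖ := by
      refine (Continuous.norm ?_)
      refine continuous_iff_continuousAt.mpr fun θ => ?_
      refine (hdiff _ ?_).continuousAt.comp (continuous_circleMap 0 r).continuousAt
      rw [show ‖circleMap 0 (r : ℝ) θ‖ = |(r : ℝ)| from by
        simpa using abs_circleMap_zero r θ]
      rwa [abs_of_nonneg r.coe_nonneg]
    have hMnn : 0 ≤ M := le_trans (norm_nonneg _) (hM 0 (by norm_num))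
    have hint : (∫ θ : ℝ in (0)..2 * Real.pi, ‖F (circleMap 0 r θ)‖) ≤ 2 * Real.pi * M := by
      have := intervalIntegral.integral_mono_on (a := 0) (b := 2 * Real.pi)
        (f := fun θ : ℝ => ‖F (circleMap 0 r θ)‖) (g := fun _ : ℝ => M)
        Real.two_pi_pos.le (hcont.intervalIntegrable _ _) (intervalIntegrable_const (μ := MeasureTheory.volume))
        (fun θ _ => by
          refine hM _ ?_
          rw [show ‖circleMap 0 (r : ℝ) θ‖ = |(r : ℝ)| from by
            simpa using abs_circleMap_zero r θ]
          rwa [abs_of_nonneg r.coe_nonneg])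
      simpa [mul_comm] using this
    rw [h1]
    refine h2.trans ?_
    have : ((2 * Real.pi)⁻¹ * ∫ θ : ℝ in (0)..2 * Real.pi, ‖F (circleMap 0 r θ)‖) ≤ M := by
      rw [inv_mul_le_iff₀ Real.two_pi_pos]
      linarith [hint]
    refine mul_le_mul_of_nonneg_right this (by positivity) |>.trans ?_
    rw [abs_of_nonneg r.coe_nonneg]
  -- take r → 1⁻
  have T : Tendsto (fun r : ℝ => M * (r⁻¹) ^ n) (𝓝[<] (1 : ℝ)) (𝓝 (M * ((1 : ℝ)⁻¹) ^ n)) := by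
    refine Tendsto.mono_left ?_ nhdsWithin_le_nhds
    exact (continuousAt_const.mul ((continuousAt_inv₀ one_ne_zero).pow n)).tendsto
  rw [show M * ((1 : ℝ)⁻¹) ^ n = M by simp] at T
  refine ge_of_tendsto T ?_
  filter_upwards [Ioo_mem_nhdsLT (show (1/2:ℝ) < 1 by norm_num)]
    with r hr
  lift r to ℝ≥0 using (by linarith [hr.1] : (0:ℝ) ≤ r)
  exact key r (by exact_mod_cast (by linarith [hr.1] : (0:ℝ) < r)) hr.2


/-- A holomorphic function `f z = Σ aₙ zⁿ` on the open unit disc belongs to `A^∞(𝔻)`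
(i.e. `f` and all its derivatives extend continuously to the closed disc) iff
`nᵏ aₙ → 0` for every `k`. -/
theorem stmt2 (a : ℕ → ℂ)
    (ha : ∀ z : ℂ, ‖z‖ < 1 → Summable fun n => a n * z ^ n) :
    ((∀ k : ℕ, ∃ g : ℂ → ℂ, ContinuousOn g (closedBall (0 : ℂ) 1) ∧
        ∀ z ∈ ball (0 : ℂ) 1,
          g z = iteratedDerivWithin k (fun w => ∑' n, a n * w ^ n) (ball (0 : ℂ) 1) z)
      ↔ ∀ k : ℕ, Tendsto (fun n : ℕ => (n : ℂ) ^ k * a n) atTop (𝓝 0)) := by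
  have hIDW : ∀ (k : ℕ) (z : ℂ), z ∈ ball (0 : ℂ) 1 →
      iteratedDerivWithin k (fun w => ∑' n, a n * w ^ n) (ball (0 : ℂ) 1) z
        = ∑' n, (Dop^[k] a) n * z ^ n := by
    intro k z hz
    rw [iteratedDerivWithin, iteratedFDerivWithin_of_isOpen k isOpen_ball hz]
    exact iterDeriv ha k z (mem_ball_zero_iff.mp hz)
  constructor
  · intro H k
    obtain ⟨g, hg, hgf⟩ := H (k + 1)
    obtain ⟨M, hM⟩ := (isCompact_closedBall (0 : ℂ) 1).exists_bound_of_continuousOn hg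
    have hMc : ∀ z : ℂ, ‖z‖ < 1 → ‖∑' n, (Dop^[k + 1] a) n * z ^ n‖ ≤ M := by
      intro z hz
      rw [← hIDW (k + 1) z (mem_ball_zero_iff.mpr hz), ← hgf z (mem_ball_zero_iff.mpr hz)]
      exact hM z (ball_subset_closedBall (mem_ball_zero_iff.mpr hz))
    have hcoef := fun n => cauchyEst (hcIter ha (k + 1)) hMc n
    have hbound : ∀ᶠ m : ℕ in atTop, ‖(m : ℂ) ^ k * a m‖ ≤ (M * 2 ^ (k + 1)) / m := by
      filter_upwards [eventually_ge_atTop (2 * k + 2)] with m hm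
      have hcm := hcoef (m - (k + 1))
      rw [iterCoeff, show m - (k + 1) + (k + 1) = m by omega] at hcm
      have hD : ((m.descFactorial (k + 1) : ℝ)) * ‖a m‖ ≤ M := by
        rwa [norm_mul, Complex.norm_natCast] at hcm
      have hlow : ((m : ℝ) / 2) ^ (k + 1) ≤ (m.descFactorial (k + 1) : ℝ) := by
        have h1 : (m - k) ^ (k + 1) ≤ m.descFactorial (k + 1) := by
          have := descFactLower (k + 1) m
          rwa [show m + 1 - (k + 1) = m - k by omega] at this
        have h2 : ((m : ℝ) / 2) ≤ ((m - k : ℕ) : ℝ) := by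
          rw [Nat.cast_sub (by omega)]
          have : (2 * k + 2 : ℝ) ≤ (m : ℝ) := by exact_mod_cast hm
          push_cast
          linarith
        calc ((m : ℝ) / 2) ^ (k + 1) ≤ ((m - k : ℕ) : ℝ) ^ (k + 1) :=
              pow_le_pow_left₀ (by positivity) h2 _
          _ = (((m - k) ^ (k + 1) : ℕ) : ℝ) := by push_cast; ring
          _ ≤ _ := by exact_mod_cast h1
      have hm0 : (0 : ℝ) < (m : ℝ) := by
        have : 2 ≤ m := by omega
        exact_mod_cast lt_of_lt_of_le (by norm_num : (0:ℕ) < 2) this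
      rw [norm_mul, norm_pow, Complex.norm_natCast, le_div_iff₀ hm0]
      have key2 : ((m : ℝ) / 2) ^ (k + 1) * ‖a m‖ ≤ M :=
        le_trans (mul_le_mul_of_nonneg_right hlow (norm_nonneg _)) hD
      have hrw : (m : ℝ) ^ k * ‖a m‖ * m = 2 ^ (k + 1) * (((m : ℝ) / 2) ^ (k + 1) * ‖a m‖) := by
        rw [div_pow]
        field_simp
        ring
      rw [hrw]
      calc (2:ℝ) ^ (k + 1) * (((m : ℝ) / 2) ^ (k + 1) * ‖a m‖) ≤ 2 ^ (k + 1) * M :=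
            mul_le_mul_of_nonneg_left key2 (by positivity)
        _ = M * 2 ^ (k + 1) := by ring
    exact squeeze_zero_norm' hbound (tendsto_const_div_atTop_nhds_zero_nat _)
  · intro H k
    obtain ⟨C, hC0, hC⟩ : ∃ C : ℝ, 0 ≤ C ∧ ∀ m : ℕ, (m : ℝ) ^ (k + 2) * ‖a m‖ ≤ C := by
      have ht : Tendsto (fun m : ℕ => ‖(m : ℂ) ^ (k + 2) * a m‖) atTop (𝓝 0) := by
        simpa using (H (k + 2)).norm
      obtain ⟨C, hC⟩ := ht.bddAbove_range
      refine ⟨C, le_trans (norm_nonneg _) (hC ⟨0, rfl⟩), fun m => ?_⟩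
      have := hC ⟨m, rfl⟩
      simpa [norm_mul, norm_pow, Complex.norm_natCast] using this
    refine ⟨fun z => ∑' n, (Dop^[k] a) n * z ^ n, ?_, fun z hz => (hIDW k z hz).symm⟩
    refine continuousOn_tsum (fun n => (continuous_const.mul (continuous_pow n)).continuousOn)
      (u := fun n => ‖(Dop^[k] a) n‖) ?_ ?_
    · refine Summable.of_norm_bounded_eventually_nat (g := fun n => C / (n : ℝ) ^ 2) ?_ ?_
      · have hs : Summable (fun n : ℕ => ((n : ℝ) ^ 2)⁻¹) :=
          Real.summable_nat_pow_inv.mpr (by norm_num)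
        simpa [div_eq_mul_inv] using hs.mul_left C
      · filter_upwards [eventually_ge_atTop 1] with n hn
        rw [norm_norm, iterCoeff, norm_mul, Complex.norm_natCast]
        have hnk : (0 : ℝ) < ((n + k : ℕ) : ℝ) := by
          have : 1 ≤ n + k := by omega
          exact_mod_cast lt_of_lt_of_le (by norm_num : (0:ℕ) < 1) this
        have h1 : (((n + k).descFactorial k : ℕ) : ℝ) ≤ ((n + k : ℕ) : ℝ) ^ k := by
          exact_mod_cast Nat.descFactorial_le_pow (n + k) k
        have h2 : ‖a (n + k)‖ ≤ C / ((n + k : ℕ) : ℝ) ^ (k + 2) := by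
          rw [le_div_iff₀ (by positivity)]
          have := hC (n + k)
          linarith [hC (n + k)]
        calc (((n + k).descFactorial k : ℕ) : ℝ) * ‖a (n + k)‖
            ≤ ((n + k : ℕ) : ℝ) ^ k * (C / ((n + k : ℕ) : ℝ) ^ (k + 2)) :=
              mul_le_mul h1 h2 (norm_nonneg _) (by positivity)
          _ = C / ((n + k : ℕ) : ℝ) ^ 2 := by
              rw [pow_add]
              field_simp
          _ ≤ C / (n : ℝ) ^ 2 := by
              apply div_le_div_of_nonneg_left hC0 ?_ ?_
              · have : 1 ≤ n := hn
                have : (1:ℝ) ≤ (n:ℝ) := by exact_mod_cast this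
                positivity
              · have : (n : ℝ) ≤ ((n + k : ℕ) : ℝ) := by
                  push_cast; linarith [Nat.cast_nonneg (α := ℝ) k]
                exact pow_le_pow_left₀ (Nat.cast_nonneg n) this 2
    · intro n z hz
      rw [mem_closedBall_zero_iff] at hz
      calc ‖(Dop^[k] a) n * z ^ n‖ = ‖(Dop^[k] a) n‖ * ‖z‖ ^ n := by rw [norm_mul, norm_pow]
        _ ≤ ‖(Dop^[k] a) n‖ * 1 :=
            mul_le_mul_of_nonneg_left (pow_le_one₀ (norm_nonneg z) hz) (norm_nonneg _)
        _ = _ := mul_one _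
end

section
/- Let X ⊆ Y be F-spaces of complex sequences with X ≠ Y such that: (i) c₀₀ ⊆ X; (ii) for every infinite A ⊆ ℕ there exists y ∈ Y \ X supported in A; (iii) c₀₀ is dense in Y; (iv) X is closed under multiplication by indicator functions of subsets of ℕ. Then there exists a dense vector subspace F of Y with F ∩ X = {0}. -/
open Filter Topology

/-- Algebraic genericity lemma.  Let `X ⊆ Y`, `X ≠ Y`, be F-spaces of complex sequences
such that (i) `c₀₀ ⊆ X`; (ii) for every infinite `A ⊆ ℕ` there is `y ∈ Y \ X` supported in
`A`; (iii) `c₀₀` is dense in `Y`; (iv) `X` is closed under multiplication by indicator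
functions of subsets of `ℕ`.  Then there is a dense vector subspace `F` of `Y` with
`F ∩ X = {0}`. -/
theorem stmt15
    (X Y : Type*)
    [AddCommGroup X] [Module ℂ X] [UniformSpace X] [IsUniformAddGroup X]
    [ContinuousSMul ℂ X] [CompleteSpace X] [TopologicalSpace.MetrizableSpace X]
    [AddCommGroup Y] [Module ℂ Y] [UniformSpace Y] [IsUniformAddGroup Y]
    [ContinuousSMul ℂ Y] [CompleteSpace Y] [TopologicalSpace.MetrizableSpace Y]
    (ιX : X →ₗ[ℂ] (ℕ → ℂ)) (ιY : Y →ₗ[ℂ] (ℕ → ℂ))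
    (hιX : Function.Injective ιX) (hιY : Function.Injective ιY)
    (hsub : Set.range ιX ⊆ Set.range ιY)
    (hne : Set.range ιX ≠ Set.range ιY)
    (h1 : ∀ a : ℕ → ℂ, (∃ N, ∀ n ≥ N, a n = 0) → a ∈ Set.range ιX)
    (h2 : ∀ A : Set ℕ, A.Infinite →
      ∃ a ∈ Set.range ιY, a ∉ Set.range ιX ∧ ∀ n ∉ A, a n = 0)
    (h3 : Dense {y : Y | ∃ N, ∀ n ≥ N, ιY y n = 0})
    (h4 : ∀ a ∈ Set.range ιX, ∀ A : Set ℕ,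
      A.indicator a ∈ Set.range ιX) :
    ∃ F : Submodule ℂ Y, Dense (F : Set Y) ∧
      ∀ y ∈ F, ιY y ∈ Set.range ιX → y = 0 := by
  classical
  -- closure properties of `Set.range ιX`
  have hXsm : ∀ (cc : ℂ) {v : ℕ → ℂ}, v ∈ Set.range ιX → cc • v ∈ Set.range ιX := by
    rintro cc v ⟨x, rfl⟩; exact ⟨cc • x, map_smul ιX cc x⟩
  have hXsub : ∀ {v w : ℕ → ℂ}, v ∈ Set.range ιX → w ∈ Set.range ιX →
      v - w ∈ Set.range ιX := by
    rintro v w ⟨x, rfl⟩ ⟨x', rfl⟩; exact ⟨x - x', map_sub ιX x x'⟩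
  have hmemX : ∀ v : ℕ → ℂ, v ∈ Set.range ιX ↔ v ∈ LinearMap.range ιX := by
    intro v; simp [LinearMap.mem_range, Set.mem_range]
  -- disjoint infinite sets
  set A : ℕ → Set ℕ := fun k => {n | (Nat.unpair n).1 = k} with hA
  have hAinf : ∀ k, (A k).Infinite := by
    intro k
    refine Set.infinite_of_injective_forall_mem (f := fun m => Nat.pair k m) ?_ ?_
    · intro a b h
      have := congrArg (fun n => (Nat.unpair n).2) h
      simpa using this
    · intro m; simp [A]
  -- choose `a k` supported in `A k`, in `Y` but not `X`
  have h2' : ∀ k, ∃ a ∈ Set.range ιY, a ∉ Set.range ιX ∧ ∀ n ∉ A k, a n = 0 :=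
    fun k => h2 (A k) (hAinf k)
  choose a haY haX hasupp using h2'
  choose y hy using haY
  -- unit basis vectors in Y
  have he' : ∀ n : ℕ, (fun m => if m = n then (1:ℂ) else 0) ∈ Set.range ιY := by
    intro n
    exact hsub (h1 _ ⟨n + 1, fun m hm => if_neg (by omega)⟩)
  choose e he using he'
  -- countable dense subset of ℂ
  obtain ⟨Q, hQc, hQd⟩ := TopologicalSpace.exists_countable_dense ℂ
  haveI := hQc.to_subtype
  -- key computation for sums of basis vectors
  have key : ∀ (M : ℕ) (c : Fin M → ℂ) (n : ℕ),
      ιY (∑ i, c i • e i) n = if h : n < M then c ⟨n, h⟩ else 0 := by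
    intro M c n
    rw [map_sum, Finset.sum_apply]
    by_cases h : n < M
    · rw [dif_pos h, Finset.sum_eq_single (⟨n, h⟩ : Fin M)]
      · simp [he]
      · intro i _ hi
        simp only [map_smul, Pi.smul_apply, he, smul_eq_mul]
        rw [if_neg fun hni => hi (Fin.ext hni.symm), mul_zero]
      · intro hn; exact absurd (Finset.mem_univ _) hn
    · rw [dif_neg h]
      apply Finset.sum_eq_zero
      intro i _
      simp only [map_smul, Pi.smul_apply, he, smul_eq_mul]
      rw [if_neg (by omega), mul_zero]
  -- the countable set T
  set g : (Σ N : ℕ, Fin N → Q) → Y := fun p => ∑ i, (p.2 i : ℂ) • e i with hg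
  set T : Set Y := Set.range g with hT
  have hTc : T.Countable := Set.countable_range g
  have hTne : T.Nonempty := ⟨g ⟨0, fun i => i.elim0⟩, ⟨_, rfl⟩⟩
  have hTzero : ∀ t ∈ T, ∃ N, ∀ n ≥ N, ιY t n = 0 := by
    rintro t ⟨⟨N, c⟩, rfl⟩
    refine ⟨N, fun n hn => ?_⟩
    rw [show g ⟨N, c⟩ = ∑ i, ((c i : ℂ)) • e i from rfl, key]
    rw [dif_neg (by omega)]
  -- c₀₀ elements are in the closure of T
  have hST : {z : Y | ∃ N, ∀ n ≥ N, ιY z n = 0} ⊆ closure T := by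
    rintro z ⟨N, hN⟩
    have hcont : Continuous (fun c : Fin N → ℂ => ∑ i, c i • e i) :=
      continuous_finset_sum _ fun i _ => (continuous_apply i).smul continuous_const
    have hz : z = ∑ i : Fin N, ιY z i • e i := by
      apply hιY
      funext n
      rw [key]
      by_cases h : n < N
      · rw [dif_pos h]
      · rw [dif_neg h]; exact hN n (le_of_not_gt h)
    have hsubimg : (fun c : Fin N → ℂ => ∑ i, c i • e i) '' {c | ∀ i, c i ∈ Q} ⊆ T := by
      rintro _ ⟨c, hc, rfl⟩
      exact ⟨⟨N, fun i => ⟨c i, hc i⟩⟩, rfl⟩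
    have hdense : Dense {c : Fin N → ℂ | ∀ i, c i ∈ Q} := by
      have h := dense_pi (Set.univ : Set (Fin N)) (fun i _ => hQd)
      convert h using 1
      ext c; simp [Set.mem_pi]
    have hmem : z ∈ (fun c : Fin N → ℂ => ∑ i, c i • e i) '' closure {c | ∀ i, c i ∈ Q} :=
      ⟨fun i => ιY z i, hdense _, hz.symm⟩
    exact closure_mono hsubimg (image_closure_subset_closure_image hcont hmem)
  have hTd : Dense T := by
    intro z
    have hz : z ∈ closure {y : Y | ∃ N, ∀ n ≥ N, ιY y n = 0} := h3 z
    have := closure_mono hST hz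
    rwa [closure_closure] at this
  obtain ⟨d, hdT⟩ := hTc.exists_eq_range hTne
  -- antitone basis of neighborhoods of 0 in Y
  obtain ⟨U, hU⟩ := (𝓝 (0 : Y)).exists_antitone_basis
  -- choose small nonzero multipliers
  have hε' : ∀ j : ℕ, ∃ ε : ℂ, ε ≠ 0 ∧ ε • y j ∈ U j := by
    intro j
    have hUj : U j ∈ 𝓝 (0 : Y) := hU.mem j
    have hcont : Tendsto (fun c : ℂ => c • y j) (𝓝 0) (𝓝 0) := by
      have h := (continuous_id.smul (continuous_const : Continuous fun _ : ℂ => y j)).tendsto 0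
      simpa [Pi.smul_def'] using h
    have hev : ∀ᶠ c : ℂ in 𝓝[≠] 0, c • y j ∈ U j :=
      (hcont.eventually (eventually_of_mem hUj fun x hx => hx)).filter_mono nhdsWithin_le_nhds
    obtain ⟨ε, hU2, hne0⟩ := (hev.and eventually_mem_nhdsWithin).exists
    exact ⟨ε, by simpa using hne0, hU2⟩
  choose ε hε0 hεU using hε'
  -- the generators
  set f : ℕ → Y := fun j => d (Nat.unpair j).1 + ε j • y j with hf
  refine ⟨Submodule.span ℂ (Set.range f), ?_, ?_⟩
  · -- density
    have hfF : ∀ j, f j ∈ Submodule.span ℂ (Set.range f) :=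
      fun j => Submodule.subset_span ⟨j, rfl⟩
    have hdcl : ∀ i, d i ∈ closure (Submodule.span ℂ (Set.range f) : Set Y) := by
      intro i
      have ht : Tendsto (fun m => ε (Nat.pair i m) • y (Nat.pair i m)) atTop (𝓝 0) :=
        hU.tendsto fun m => hU.antitone (Nat.right_le_pair i m) (hεU _)
      have ht2 : Tendsto (fun m => f (Nat.pair i m)) atTop (𝓝 (d i)) := by
        have heq : ∀ m, f (Nat.pair i m) = d i + ε (Nat.pair i m) • y (Nat.pair i m) := by
          intro m; simp [hf, Nat.unpair_pair]
        have := tendsto_const_nhds (x := d i) (f := atTop (α := ℕ)) |>.add ht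
        rw [add_zero] at this
        simpa [heq] using this
      exact mem_closure_of_tendsto ht2 (Eventually.of_forall fun m => hfF _)
    intro z
    have hz : z ∈ closure T := hTd z
    rw [hdT] at hz
    have hsubcl : Set.range d ⊆ closure (Submodule.span ℂ (Set.range f) : Set Y) :=
      Set.range_subset_iff.2 hdcl
    have := closure_mono hsubcl hz
    rwa [closure_closure] at this
  · -- trivial intersection with X
    intro z hz hzX
    rw [Finsupp.mem_span_range_iff_exists_finsupp] at hz
    obtain ⟨c, hc⟩ := hz
    have hck : ∀ k, c k = 0 := by
      intro k
      by_contra hk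
      -- the c₀₀ part is in range ιX
      have hu : (c.sum fun j cj => cj • ιY (d (Nat.unpair j).1)) ∈ Set.range ιX := by
        rw [hmemX]
        apply Submodule.finsuppSum_mem
        intro j _
        apply Submodule.smul_mem
        rw [← hmemX]
        have hdi : d (Nat.unpair j).1 ∈ T := hdT ▸ ⟨(Nat.unpair j).1, rfl⟩
        exact h1 _ (hTzero _ hdi)
      -- the difference
      have hs : ιY z - (c.sum fun j cj => cj • ιY (d (Nat.unpair j).1)) =
          c.sum fun j cj => (cj * ε j) • a j := by
        rw [← hc, map_finsuppSum, ← Finsupp.sum_sub]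
        apply Finsupp.sum_congr
        intro j _
        rw [map_smul]
        have hfj : ιY (f j) = ιY (d (Nat.unpair j).1) + ε j • a j := by
          rw [hf]; simp only [map_add, map_smul, hy]
        rw [hfj, smul_add, add_sub_cancel_left, smul_smul]
      have hsX : (c.sum fun j cj => (cj * ε j) • a j) ∈ Set.range ιX :=
        hs ▸ hXsub hzX hu
      have hind := h4 _ hsX (A k)
      have hkind : (A k).indicator (c.sum fun j cj => (cj * ε j) • a j) =
          (c k * ε k) • a k := by
        funext n
        by_cases hn : n ∈ A k
        · rw [Set.indicator_of_mem hn]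
          rw [show ((c.sum fun j cj => (cj * ε j) • a j) n) =
              ∑ j ∈ c.support, ((c j * ε j) • a j) n from by
            rw [Finsupp.sum]; rw [Finset.sum_apply]]
          rw [Finset.sum_eq_single_of_mem k (Finsupp.mem_support_iff.2 hk)]
          intro j _ hj
          have hnj : n ∉ A j := by
            simp only [hA, Set.mem_setOf_eq] at hn ⊢
            rw [hn]; exact fun h => hj h.symm
          simp [hasupp j n hnj]
        · rw [Set.indicator_of_notMem hn]
          simp [hasupp k n hn]
      rw [hkind] at hind
      have hak : a k ∈ Set.range ιX := by
        have h := hXsm (c k * ε k)⁻¹ hind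
        rwa [smul_smul, inv_mul_cancel₀ (mul_ne_zero hk (hε0 k)), one_smul] at h
      exact haX k hak
    have hc0 : c = 0 := Finsupp.ext hck
    rw [← hc, hc0, Finsupp.sum_zero_index]
end

section
/- Let X ⊆ Y be F-spaces of complex sequences with X ≠ Y such that: (i) for every infinite A ⊆ ℕ there exists y ∈ Y \ X supported in A; (ii) convergence in Y implies coordinatewise convergence; (iii) X is closed under multiplication by indicator functions of subsets of ℕ. Then there exists a closed infinite-dimensional vector subspace F of Y with F ∩ X = {0}. -/
open Filter Topology

/-- Spaceability lemma.  Let `X ⊆ Y`, `X ≠ Y`, be F-spaces of complex sequences such that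
(i) for every infinite `A ⊆ ℕ` there is `y ∈ Y \ X` supported in `A`; (ii) convergence in
`Y` implies coordinatewise convergence; (iii) `X` is closed under multiplication by
indicator functions of subsets of `ℕ`.  Then there is a closed infinite-dimensional vector
subspace `F` of `Y` with `F ∩ X = {0}`. -/
theorem stmt16
    (X Y : Type*)
    [AddCommGroup X] [Module ℂ X] [UniformSpace X] [IsUniformAddGroup X]
    [ContinuousSMul ℂ X] [CompleteSpace X] [TopologicalSpace.MetrizableSpace X]
    [AddCommGroup Y] [Module ℂ Y] [UniformSpace Y] [IsUniformAddGroup Y]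
    [ContinuousSMul ℂ Y] [CompleteSpace Y] [TopologicalSpace.MetrizableSpace Y]
    (ιX : X →ₗ[ℂ] (ℕ → ℂ)) (ιY : Y →ₗ[ℂ] (ℕ → ℂ))
    (hιX : Function.Injective ιX) (hιY : Function.Injective ιY)
    (hsub : Set.range ιX ⊆ Set.range ιY)
    (hne : Set.range ιX ≠ Set.range ιY)
    (h1 : ∀ A : Set ℕ, A.Infinite →
      ∃ a ∈ Set.range ιY, a ∉ Set.range ιX ∧ ∀ n ∉ A, a n = 0)
    (h2 : ∀ (u : ℕ → Y) (y : Y), Tendsto u atTop (𝓝 y) →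
      ∀ n, Tendsto (fun m => ιY (u m) n) atTop (𝓝 (ιY y n)))
    (h3 : ∀ a ∈ Set.range ιX, ∀ A : Set ℕ, A.indicator a ∈ Set.range ιX) :
    ∃ F : Submodule ℂ Y, IsClosed (F : Set Y) ∧ ¬ FiniteDimensional ℂ F ∧
      ∀ y ∈ F, ιY y ∈ Set.range ιX → y = 0 := by
  classical
  -- pairwise disjoint infinite sets
  set A : ℕ → Set ℕ := fun j => Set.range (fun k => Nat.pair j k) with hAdef
  have hAinf : ∀ j, (A j).Infinite := by
    intro j
    exact Set.infinite_range_of_injective (fun a b h => (Nat.pair_eq_pair.mp h).2)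
  have hAdisj : ∀ i j : ℕ, i ≠ j → ∀ n ∈ A i, n ∉ A j := by
    rintro i j hij n ⟨k, rfl⟩ ⟨l, hl⟩
    exact hij ((Nat.pair_eq_pair.mp hl).1).symm
  -- choose vectors
  choose a haY haX hasupp using fun j => h1 (A j) (hAinf j)
  choose v hv using haY
  have hvX : ∀ j, ιY (v j) ∉ Set.range ιX := fun j => (hv j).symm ▸ haX j
  have hvsupp : ∀ j, ∀ n ∉ A j, ιY (v j) n = 0 := fun j n hn => (hv j).symm ▸ hasupp j n hn
  have hvne : ∀ j, ιY (v j) ≠ 0 := by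
    intro j h
    exact hvX j (h ▸ ⟨0, by simp⟩)
  have hn0 : ∀ j, ∃ n ∈ A j, ιY (v j) n ≠ 0 := by
    intro j
    rcases Function.ne_iff.mp (hvne j) with ⟨n, hn⟩
    exact ⟨n, by_contra fun hm => hn (hvsupp j n hm), hn⟩
  choose n0 hn0A hn0ne using hn0
  set F : Submodule ℂ Y := (Submodule.span ℂ (Set.range v)).topologicalClosure with hF
  refine ⟨F, Submodule.isClosed_topologicalClosure _, ?_, ?_⟩
  · -- infinite-dimensional
    intro hfin
    have hvmem : ∀ j, v j ∈ F :=
      fun j => Submodule.le_topologicalClosure _ (Submodule.subset_span ⟨j, rfl⟩)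
    have hliY : LinearIndependent ℂ (fun j => ιY (v j)) := by
      rw [linearIndependent_iff']
      intro s g hsum i hi
      have := congrFun hsum (n0 i)
      simp only [Finset.sum_apply, Pi.smul_apply, smul_eq_mul, Pi.zero_apply] at this
      rw [Finset.sum_eq_single i (fun j _ hj => by
        rw [hvsupp j (n0 i) (fun h => hAdisj i j (fun e => hj (e ▸ rfl)) (n0 i) (hn0A i) h),
          mul_zero]) (fun h => absurd hi h)] at this
      exact (mul_eq_zero.mp this).resolve_right (hn0ne i)
    have hliv : LinearIndependent ℂ v := hliY.of_comp ιY
    have hliF : LinearIndependent ℂ (fun j => (⟨v j, hvmem j⟩ : F)) := by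
      apply LinearIndependent.of_comp F.subtype
      convert hliv
      rfl
    exact Module.Finite.not_linearIndependent_of_infinite _ hliF
  · -- F ∩ X = 0
    intro y hy hyX
    rcases mem_closure_iff_seq_limit.mp hy with ⟨u, hu, hut⟩
    -- on each A j, span elements are multiples of v j
    have coeff : ∀ (j : ℕ) (z : Y), z ∈ Submodule.span ℂ (Set.range v) →
        ∃ t : ℂ, ∀ n ∈ A j, ιY z n = t * ιY (v j) n := by
      intro j z hz
      induction hz using Submodule.span_induction with
      | mem x hx =>
        rcases hx with ⟨i, rfl⟩
        by_cases hij : i = j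
        · exact ⟨1, fun n _ => by rw [hij, one_mul]⟩
        · exact ⟨0, fun n hn => by
            rw [zero_mul, hvsupp i n (fun h => hAdisj j i (Ne.symm hij) n hn h)]⟩
      | zero => exact ⟨0, fun n _ => by simp⟩
      | add x z hx hz ihx ihz =>
        rcases ihx with ⟨t1, h1'⟩; rcases ihz with ⟨t2, h2'⟩
        exact ⟨t1 + t2, fun n hn => by
          rw [map_add]; simp [h1' n hn, h2' n hn]; ring⟩
      | smul c x hx ih =>
        rcases ih with ⟨t, ht⟩
        exact ⟨c * t, fun n hn => by
          rw [map_smul]; simp [ht n hn]; ring⟩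
    have key : ∀ (j : ℕ) (n : ℕ), n ∈ A j → ιY y n = 0 := by
      intro j n hn
      choose t ht using fun m => coeff j (u m) (hu m)
      set c : ℂ := ιY y (n0 j) / ιY (v j) (n0 j) with hc
      have htc : Tendsto t atTop (𝓝 c) := by
        have h0 : Tendsto (fun m => ιY (u m) (n0 j)) atTop (𝓝 (ιY y (n0 j))) :=
          h2 u y hut (n0 j)
        have : (fun m => ιY (u m) (n0 j) / ιY (v j) (n0 j)) = t := by
          funext m
          rw [ht m (n0 j) (hn0A j), mul_div_assoc, div_self (hn0ne j), mul_one]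
        rw [← this]
        exact h0.div_const _
      have hlim : ∀ n' ∈ A j, ιY y n' = c * ιY (v j) n' := by
        intro n' hn'
        refine tendsto_nhds_unique (h2 u y hut n') ?_
        have : (fun m => ιY (u m) n') = fun m => t m * ιY (v j) n' := by
          funext m; exact ht m n' hn'
        rw [this]
        exact htc.mul_const _
      -- indicator of A j of ιY y is c • ιY (v j), which lies in range ιX
      have hind : (A j).indicator (ιY y) = c • ιY (v j) := by
        funext n'
        by_cases hn' : n' ∈ A j
        · rw [Set.indicator_of_mem hn']; exact hlim n' hn'
        · rw [Set.indicator_of_notMem hn']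
          simp [hvsupp j n' hn']
      have hmem : c • ιY (v j) ∈ Set.range ιX := hind ▸ h3 (ιY y) hyX (A j)
      have hc0 : c = 0 := by
        by_contra hc0
        rcases hmem with ⟨x, hx⟩
        exact hvX j ⟨c⁻¹ • x, by rw [map_smul, hx, smul_smul, inv_mul_cancel₀ hc0, one_smul]⟩
      rw [hlim n hn, hc0, zero_mul]
    have : ιY y = 0 := by
      funext n
      exact key (Nat.unpair n).1 n ⟨(Nat.unpair n).2, Nat.pair_unpair n⟩
    exact hιY (by rw [this, map_zero])
end
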